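/- With x_m := (e_{0m}, (0 m)) in Graphs(n+1) ⋊ S_{n+1} as above, for every i in {1,...,n} one has x_i² = identity, and for distinct i, j one has (x_i x_j)³ = identity. -/

import Mathlib

open Equiv Finset

abbrev Vtx (n : ℕ) := Fin (n+1)
abbrev Edge (n : ℕ) := {e : Sym2 (Vtx n) // ¬ e.IsDiag}
abbrev Graphs (n : ℕ) := Edge n → ZMod 2

/-- relabelling of edges by a permutation of vertices -/
def permEdge {n : ℕ} (σ : Perm (Vtx n)) : Edge n ≃ Edge n where
  toFun e := ⟨Sym2.map σ e.1, by
    simpa [Sym2.isDiag_map σ.injective] using e.2⟩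
  invFun e := ⟨Sym2.map σ.symm e.1, by
    simpa [Sym2.isDiag_map σ.symm.injective] using e.2⟩
  left_inv e := by
    ext1
    simp [Sym2.map_map]
  right_inv e := by
    ext1
    simp [Sym2.map_map]

/-- action of a vertex permutation on graphs -/
def gact {n : ℕ} (σ : Perm (Vtx n)) : Graphs n ≃+ Graphs n where
  toFun g := fun e => g ((permEdge σ).symm e)
  invFun g := fun e => g (permEdge σ e)
  left_inv g := by funext e; simp
  right_inv g := by funext e; simp
  map_add' g h := rfl

lemma gact_mul {n : ℕ} (σ τ : Perm (Vtx n)) (g : Graphs n) :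
    gact (σ * τ) g = gact σ (gact τ g) := by
  funext e
  simp only [gact, AddEquiv.coe_mk, Equiv.coe_fn_mk, Equiv.symm]
  congr 1
  ext1
  simp [permEdge, Sym2.map_map]
  rfl

/-- the action as a homomorphism to automorphisms, multiplicatively -/
def φn (n : ℕ) : Perm (Vtx n) →* MulAut (Multiplicative (Graphs n)) where
  toFun σ := AddEquiv.toMultiplicative (gact σ)
  map_one' := by
    ext g x
    simp [gact, permEdge, Equiv.Perm.one_symm]
  map_mul' σ τ := by
    ext g x
    exact congrFun (gact_mul σ τ g.toAdd) x

/-- the ambient group `Graphs(n+1) ⋊ S_{n+1}` -/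
abbrev DG (n : ℕ) := SemidirectProduct (Multiplicative (Graphs n)) (Perm (Vtx n)) (φn n)

/-- the single-edge graph with edge `{u,v}` -/
def single {n : ℕ} (u v : Vtx n) : Graphs n :=
  fun e => if e.1 = s(u, v) then 1 else 0

/-- the generator `x_m = (e_{0m}, (0 m))` -/
def xgen {n : ℕ} (m : Vtx n) : DG n :=
  ⟨Multiplicative.ofAdd (single 0 m), Equiv.swap 0 m⟩

/-- the degree of a vertex in a graph -/
def deg {n : ℕ} (g : Graphs n) (v : Vtx n) : ℕ :=
  (Finset.univ.filter (fun e : Edge n => v ∈ e.1 ∧ g e = 1)).card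

/-- the number of edges of a graph -/
def nedges {n : ℕ} (g : Graphs n) : ℕ :=
  (Finset.univ.filter (fun e : Edge n => g e = 1)).card

/-- all degrees even and an even number of edges -/
def evenGraph {n : ℕ} (g : Graphs n) : Prop :=
  (∀ v : Vtx n, Even (deg g v)) ∧ Even (nedges g)

/-- the subgroup generated by the `x_m`, `m = 1, …, n` -/
def Dn (n : ℕ) : Subgroup (DG n) :=
  Subgroup.closure {x | ∃ m : Vtx n, m ≠ 0 ∧ x = xgen m}

/-- the complete graph -/
def complete (n : ℕ) : Graphs n := fun _ => 1

lemma single_comm {n : ℕ} (u v : Vtx n) : single u v = single v u := by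
  funext e
  simp only [single]
  rw [Sym2.eq_swap]

lemma gact_single {n : ℕ} (σ : Perm (Vtx n)) (u v : Vtx n) :
    gact σ (single u v) = single (σ u) (σ v) := by
  funext e
  simp only [gact, single, AddEquiv.coe_mk, Equiv.coe_fn_mk, Equiv.symm, permEdge]
  congr 1
  apply propext
  constructor
  · intro h
    have := congrArg (Sym2.map σ) h
    rw [Sym2.map_map] at this
    simpa using this
  · intro h
    rw [h]
    simp

lemma add_self_graph {n : ℕ} (g : Graphs n) : g + g = 0 := by
  funext e
  simp only [Pi.add_apply, Pi.zero_apply]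
  exact CharTwo.add_self_eq_zero _

lemma phin_mul {n : ℕ} (σ : Perm (Vtx n)) (x y : Multiplicative (Graphs n)) :
    φn n σ (x * y) = φn n σ x * φn n σ y := map_mul _ _ _

lemma phin_apply {n : ℕ} (σ : Perm (Vtx n)) (g : Graphs n) :
    φn n σ (Multiplicative.ofAdd g) = Multiplicative.ofAdd (gact σ g) := rfl


lemma swap_cube {α : Type*} [DecidableEq α] {a b c : α} (hab : a ≠ b) (hac : a ≠ c)
    (hbc : b ≠ c) :
    (Equiv.swap a b * Equiv.swap a c) * (Equiv.swap a b * Equiv.swap a c) *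
      (Equiv.swap a b * Equiv.swap a c) = 1 := by
  set τ := Equiv.swap a b * Equiv.swap a c with hτ
  have h1 : τ a = c := by
    simp [hτ, Equiv.Perm.mul_apply, Equiv.swap_apply_left,
      Equiv.swap_apply_of_ne_of_ne (Ne.symm hac) (Ne.symm hbc)]
  have h2 : τ b = a := by
    simp [hτ, Equiv.Perm.mul_apply, Equiv.swap_apply_right,
      Equiv.swap_apply_of_ne_of_ne (Ne.symm hab) hbc]
  have h3 : τ c = b := by
    simp [hτ, Equiv.Perm.mul_apply, Equiv.swap_apply_right, Equiv.swap_apply_left]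
  have h4 : ∀ v, v ≠ a → v ≠ b → v ≠ c → τ v = v := by
    intro v hva hvb hvc
    simp [hτ, Equiv.Perm.mul_apply, Equiv.swap_apply_of_ne_of_ne hva hvb,
      Equiv.swap_apply_of_ne_of_ne hva hvc]
  ext v
  show τ (τ (τ v)) = v
  rcases eq_or_ne v a with rfl | hva
  · rw [h1, h3, h2]
  rcases eq_or_ne v b with rfl | hvb
  · rw [h2, h1, h3]
  rcases eq_or_ne v c with rfl | hvc
  · rw [h3, h2, h1]
  · rw [h4 v hva hvb hvc, h4 v hva hvb hvc, h4 v hva hvb hvc]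

/-- In `Graphs(n+1) ⋊ S_{n+1}`, every `x_i` satisfies `x_i² = 1`, and for distinct
`i, j` one has `(x_i x_j)³ = 1`. -/
theorem stmt5 (n : ℕ) (i j : Vtx n) (hi : i ≠ 0) (hj : j ≠ 0) (hij : i ≠ j) :
    (xgen i) ^ 2 = 1 ∧ (xgen i * xgen j) ^ 3 = 1 := by
  have hji : j ≠ i := Ne.symm hij
  constructor
  · rw [pow_two]
    apply SemidirectProduct.ext
    · simp only [SemidirectProduct.mul_left, SemidirectProduct.one_left, xgen,
        phin_apply, gact_single, Equiv.swap_apply_left, Equiv.swap_apply_right]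
      rw [single_comm i 0, ← ofAdd_add, add_self_graph]
      rfl
    · simp only [SemidirectProduct.mul_right, SemidirectProduct.one_right, xgen]
      exact Equiv.swap_mul_self 0 i
  · rw [pow_succ, pow_succ, pow_one]
    apply SemidirectProduct.ext
    · simp only [SemidirectProduct.mul_left, SemidirectProduct.mul_right,
        SemidirectProduct.one_left, xgen, map_mul, MulAut.mul_apply, phin_mul,
        phin_apply, gact_single,
        Equiv.swap_apply_left, Equiv.swap_apply_right,
        Equiv.swap_apply_of_ne_of_ne hj hji, Equiv.swap_apply_of_ne_of_ne hi hij]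
      simp only [← ofAdd_add]
      rw [ofAdd_eq_one]
      funext e
      simp only [Pi.add_apply, Pi.zero_apply, single]
      split_ifs <;> rfl
    · simp only [SemidirectProduct.mul_right, SemidirectProduct.one_right, xgen]
      exact swap_cube (Ne.symm hi) (Ne.symm hj) hij
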